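/- Let n ≥ 1 be an integer, η > 0 a real number, and let a, b : Fin n → ℝ be vectors with all entries strictly positive. If ∑_{i} (a i / b i)^η * ( b i / (∑_{j} b j) − a i / (∑_{j} a j) ) = 0, then there exists a real c > 0 such that a i = c * b i for every i. -/

import Mathlib

/-- Equality case of the SPO lemma inequality: if
`∑ i, (a i / b i) ^ η * (b i / ∑ j, b j - a i / ∑ j, a j) = 0`, then `a = c • b`
for some `c > 0`. -/
theorem spo_lemma_eq_case (n : ℕ) (hn : 1 ≤ n) (η : ℝ) (hη : 0 < η)
    (a b : Fin n → ℝ) (ha : ∀ i, 0 < a i) (hb : ∀ i, 0 < b i)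
    (heq : ∑ i, (a i / b i) ^ η * (b i / (∑ j, b j) - a i / (∑ j, a j)) = 0) :
    ∃ c : ℝ, 0 < c ∧ ∀ i, a i = c * b i := by
  have hne : (Finset.univ : Finset (Fin n)).Nonempty :=
    ⟨⟨0, hn⟩, Finset.mem_univ _⟩
  have hSa : 0 < ∑ j, a j := Finset.sum_pos (fun i _ => ha i) hne
  have hSb : 0 < ∑ j, b j := Finset.sum_pos (fun i _ => hb i) hne
  set Sa := ∑ j, a j with hSadef
  set Sb := ∑ j, b j with hSbdef
  set c := Sa / Sb with hcdef
  have hc0 : 0 < c := div_pos hSa hSb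
  refine ⟨c, hc0, fun i => ?_⟩
  -- the nonpositive terms
  set g : Fin n → ℝ := fun i =>
    ((a i / b i) ^ η - c ^ η) * (b i * c - a i) with hgdef
  have hbc : ∀ i, b i * c - a i = b i * (c - a i / b i) := by
    intro i
    have h := (hb i).ne'
    field_simp
  have hgle : ∀ i ∈ Finset.univ, g i ≤ 0 := by
    intro i _
    have hr : 0 < a i / b i := div_pos (ha i) (hb i)
    rcases lt_trichotomy (a i / b i) c with h | h | h
    · have h1 : (a i / b i) ^ η < c ^ η :=
        Real.rpow_lt_rpow hr.le h hη
      have h2 : 0 < b i * c - a i := by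
        rw [hbc i]; exact mul_pos (hb i) (sub_pos.mpr h)
      have : ((a i / b i) ^ η - c ^ η) * (b i * c - a i) ≤ 0 :=
        mul_nonpos_iff.mpr (Or.inr ⟨by linarith, h2.le⟩)
      simpa [hgdef] using this
    · simp [hgdef, h]
    · have h1 : c ^ η < (a i / b i) ^ η :=
        Real.rpow_lt_rpow hc0.le h hη
      have h2 : b i * c - a i < 0 := by
        rw [hbc i]
        have : c - a i / b i < 0 := by linarith
        nlinarith [hb i]
      have : ((a i / b i) ^ η - c ^ η) * (b i * c - a i) ≤ 0 :=
        mul_nonpos_iff.mpr (Or.inl ⟨by linarith, h2.le⟩)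
      simpa [hgdef] using this
  have h2sum : ∑ i, (b i * c - a i) = 0 := by
    rw [Finset.sum_sub_distrib, ← Finset.sum_mul]
    rw [hcdef]
    field_simp
    simp only [hSadef, hSbdef]
    ring
  have h1sum : ∑ i, (a i / b i) ^ η * (b i * c - a i) = 0 := by
    have : ∀ i ∈ Finset.univ, (a i / b i) ^ η * (b i * c - a i)
        = Sa * ((a i / b i) ^ η * (b i / Sb - a i / Sa)) := by
      intro i _
      rw [hcdef]
      field_simp
    rw [Finset.sum_congr rfl this, ← Finset.mul_sum, heq, mul_zero]
  have hgsum : ∑ i, g i = 0 := by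
    have : ∀ i ∈ Finset.univ, g i
        = (a i / b i) ^ η * (b i * c - a i) - c ^ η * (b i * c - a i) := by
      intro i _; simp [hgdef]; ring
    rw [Finset.sum_congr rfl this, Finset.sum_sub_distrib, h1sum,
      ← Finset.mul_sum, h2sum, mul_zero, sub_zero]
  have hzero : g i = 0 := by
    have := (Finset.sum_eq_zero_iff_of_nonpos hgle).mp hgsum i (Finset.mem_univ i)
    exact this
  -- extract equality
  have hr : 0 < a i / b i := div_pos (ha i) (hb i)
  have hreq : a i / b i = c := by
    by_contra hne'
    rcases lt_or_gt_of_ne hne' with h | h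
    · have h1 : (a i / b i) ^ η < c ^ η := Real.rpow_lt_rpow hr.le h hη
      have h2 : 0 < b i * c - a i := by
        rw [hbc i]; exact mul_pos (hb i) (sub_pos.mpr h)
      have : g i < 0 := by
        have := mul_neg_of_neg_of_pos (sub_neg.mpr h1) h2
        simpa [hgdef] using this
      linarith
    · have h1 : c ^ η < (a i / b i) ^ η := Real.rpow_lt_rpow hc0.le h hη
      have h2 : b i * c - a i < 0 := by
        rw [hbc i]
        have : c - a i / b i < 0 := by linarith
        nlinarith [hb i]
      have : g i < 0 := by
        have := mul_neg_of_pos_of_neg (sub_pos.mpr h1) h2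
        simpa [hgdef] using this
      linarith
  exact (div_eq_iff (hb i).ne').mp hreq
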